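/- There exist absolute constants C₁, C₂ > 0 such that the following holds. Fix n, pick γ∈(1,√n), ε∈(0,1/(20γ)), κ>1, and α∈[0,1]^n with ∏_{i=1}^n α_i ≥ κ^{−n}. For any set S ⊂ S^{n−1} there exists a finite set 𝒩 ⊂ (5/4)B₂^n ∖ (3/4)B₂^n such that S ⊂ 𝒩 + (4εγ/√n)P_α and #𝒩 ≤ N(S, εB₂^n) · κ^n · (C₁γ)^{C₂ n/γ²}. -/

import Mathlib

set_option maxHeartbeats 1000000

open MeasureTheory Finset


/-- Euclidean norm of a vector in `ℝ^m`. -/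
noncomputable def euclNorm {m : ℕ} (v : Fin m → ℝ) : ℝ := Real.sqrt (∑ i, v i ^ 2)

/-- `coverNum S K` is the minimal number of translates of `K` needed to cover `S`. -/
noncomputable def coverNum {n : ℕ} (S K : Set (Fin n → ℝ)) : ℕ :=
  sInf {m : ℕ | ∃ T : Finset (Fin n → ℝ), T.card = m ∧ S ⊆ {y | ∃ t ∈ T, y - t ∈ K}}

lemma gauss_sum_le (s : ℝ) (hs : 0 < s) (N : ℕ) :
    ∑ j ∈ Finset.range N, Real.exp (-s * ((j:ℝ)+1)^2) ≤ Real.sqrt (Real.pi / s) / 2 := by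
  have hint : MeasureTheory.Integrable (fun x : ℝ => Real.exp (-s * x^2)) := by
    exact integrable_exp_neg_mul_sq hs
  have key : ∀ j : ℕ, Real.exp (-s * ((j:ℝ)+1)^2) ≤
      ∫ x in (j:ℝ)..((j:ℝ)+1), Real.exp (-s * x^2) := by
    intro j
    have h1 : Real.exp (-s * ((j:ℝ)+1)^2) =
        ∫ _x in (j:ℝ)..((j:ℝ)+1), Real.exp (-s * ((j:ℝ)+1)^2) := by
      rw [intervalIntegral.integral_const]; simp
    rw [h1]
    apply intervalIntegral.integral_mono_on (by linarith) (intervalIntegrable_const)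
      hint.intervalIntegrable
    intro x hx
    apply Real.exp_le_exp.2
    have hx0 : (0:ℝ) ≤ x := le_trans (Nat.cast_nonneg j) hx.1
    nlinarith [hx.1, hx.2, sq_nonneg x, mul_le_mul_of_nonneg_left (mul_self_le_mul_self hx0 hx.2) hs.le]
  calc ∑ j ∈ Finset.range N, Real.exp (-s * ((j:ℝ)+1)^2)
      ≤ ∑ j ∈ Finset.range N, ∫ x in (j:ℝ)..((j:ℝ)+1), Real.exp (-s * x^2) :=
        Finset.sum_le_sum fun j _ => key j
    _ = ∫ x in (0:ℝ)..(N:ℝ), Real.exp (-s * x^2) := by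
        have := intervalIntegral.sum_integral_adjacent_intervals
          (a := fun k : ℕ => (k:ℝ)) (f := fun x => Real.exp (-s * x^2)) (μ := volume) (n := N)
          (fun k _ => hint.intervalIntegrable)
        simpa using this
    _ ≤ ∫ x in Set.Ioi (0:ℝ), Real.exp (-s * x^2) := by
        rw [intervalIntegral.integral_of_le (by positivity)]
        apply MeasureTheory.setIntegral_mono_set hint.integrableOn
        · filter_upwards with x using (Real.exp_pos _).le
        · exact Filter.Eventually.of_forall (fun x hx => hx.1)
    _ = Real.sqrt (Real.pi / s) / 2 := integral_gaussian_Ioi s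

lemma geom_sum_exp_le (s : ℝ) (hs : 0 < s) (N : ℕ) :
    ∑ j ∈ Finset.range N, Real.exp (-s * ((j:ℝ)+1)^2) ≤
      Real.exp (-s) / (1 - Real.exp (-s)) := by
  have hr0 : (0:ℝ) ≤ Real.exp (-s) := (Real.exp_pos _).le
  have hr1 : Real.exp (-s) < 1 := by
    rw [Real.exp_lt_one_iff]; linarith
  have key : ∀ j : ℕ, Real.exp (-s * ((j:ℝ)+1)^2) ≤ Real.exp (-s) * (Real.exp (-s))^j := by
    intro j
    have h2 : Real.exp (-s) * (Real.exp (-s))^j = Real.exp (-s * ((j:ℝ)+1)) := by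
      rw [← Real.exp_nat_mul, ← Real.exp_add]; ring_nf
    rw [h2]
    apply Real.exp_le_exp.2
    nlinarith [Nat.cast_nonneg (α := ℝ) j,
      mul_nonneg (mul_nonneg hs.le (Nat.cast_nonneg (α := ℝ) j))
        (by linarith [Nat.cast_nonneg (α := ℝ) j] : (0:ℝ) ≤ (j:ℝ)+1)]
  calc ∑ j ∈ Finset.range N, Real.exp (-s * ((j:ℝ)+1)^2)
      ≤ ∑ j ∈ Finset.range N, Real.exp (-s) * (Real.exp (-s))^j :=
        Finset.sum_le_sum fun j _ => key j
    _ = Real.exp (-s) * ∑ j ∈ Finset.range N, (Real.exp (-s))^j := by rw [Finset.mul_sum]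
    _ ≤ Real.exp (-s) * (1 - Real.exp (-s))⁻¹ := by
        apply mul_le_mul_of_nonneg_left _ hr0
        apply (Summable.sum_le_tsum _ (fun j _ => pow_nonneg hr0 j)
          (summable_geometric_of_lt_one hr0 hr1)).trans
        rw [tsum_geometric_of_lt_one hr0 hr1]
    _ = Real.exp (-s) / (1 - Real.exp (-s)) := by rw [div_eq_mul_inv]

lemma sym_sum_eq (B : ℤ) (hB : 1 ≤ B) (s : ℝ) :
    ∑ k ∈ Finset.Icc (-B) B, Real.exp (-s * (k:ℝ)^2) =
      1 + 2 * ∑ j ∈ Finset.range B.toNat, Real.exp (-s * ((j:ℝ)+1)^2) := by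
  have hsplit : Finset.Icc (-B) B = Finset.Icc (-B) (-1) ∪ Finset.Icc 0 B := by
    ext a; simp only [Finset.mem_Icc, Finset.mem_union]; omega
  have hdisj : Disjoint (Finset.Icc (-B) (-1)) (Finset.Icc (0:ℤ) B) := by
    rw [Finset.disjoint_left]; intro a ha hb
    simp only [Finset.mem_Icc] at ha hb; omega
  rw [hsplit, Finset.sum_union hdisj]
  have h0 : Finset.Icc (0:ℤ) B = insert 0 (Finset.Icc 1 B) := by
    ext a; simp only [Finset.mem_Icc, Finset.mem_insert]; omega
  rw [h0, Finset.sum_insert (by simp)]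
  have hneg : ∑ k ∈ Finset.Icc (-B) (-1), Real.exp (-s * (k:ℝ)^2) =
      ∑ k ∈ Finset.Icc (1:ℤ) B, Real.exp (-s * (k:ℝ)^2) := by
    refine Finset.sum_nbij' (i := fun k => -k) (j := fun k => -k) ?_ ?_ ?_ ?_ ?_
    · intro a ha; simp only [Finset.mem_Icc] at *; omega
    · intro a ha; simp only [Finset.mem_Icc] at *; omega
    · intro a _; ring
    · intro a _; ring
    · intro a _; congr 1; push_cast; ring
  have hcast : ∑ k ∈ Finset.Icc (1:ℤ) B, Real.exp (-s * (k:ℝ)^2) =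
      ∑ j ∈ Finset.range B.toNat, Real.exp (-s * ((j:ℝ)+1)^2) := by
    refine Finset.sum_nbij' (i := fun k : ℤ => (k - 1).toNat) (j := fun j : ℕ => (j:ℤ) + 1)
      ?_ ?_ ?_ ?_ ?_
    · intro a ha; simp only [Finset.mem_Icc, Finset.mem_range] at *; omega
    · intro a ha; simp only [Finset.mem_Icc, Finset.mem_range] at *; omega
    · intro a ha; simp only [Finset.mem_Icc] at ha
      show ((a - 1).toNat : ℤ) + 1 = a; omega
    · intro a _; show ((a:ℤ) + 1 - 1).toNat = a; omega
    · intro a ha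
      simp only [Finset.mem_Icc] at ha
      have hc : (((a - 1).toNat : ℕ) : ℝ) = (a:ℝ) - 1 := by
        have h' : (((a-1).toNat : ℕ) : ℤ) = a - 1 := by omega
        exact_mod_cast congrArg (Int.cast : ℤ → ℝ) h'
      congr 1; rw [hc]; ring
  rw [hneg, hcast]
  simp [Real.exp_zero]; ring

lemma coord_bound (γ a : ℝ) (hγ : 1 < γ) (ha0 : 0 < a) (ha1 : a ≤ 1) (B : ℤ) (hB : 1 ≤ B) :
    ∑ k ∈ Finset.Icc (-B) B, Real.exp (-(400 * Real.log (2*γ) * a^2) * (k:ℝ)^2)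
      ≤ (1 + Real.log (2*γ) / γ^2) / a := by
  have h2γ : (1:ℝ) < 2*γ := by linarith
  have hlog2 : (0.6931471803 : ℝ) < Real.log 2 := Real.log_two_gt_d9
  have hL2 : Real.log 2 ≤ Real.log (2*γ) := Real.log_le_log (by norm_num) (by linarith)
  set L := Real.log (2*γ) with hLdef
  have hL0 : 0 < L := by linarith
  have hη0 : 0 ≤ L / γ^2 := by positivity
  have hs0 : 0 < 400 * L * a^2 := by positivity
  rw [sym_sum_eq B hB _]
  set s := 400 * L * a^2 with hsdef
  have hlast : (1 + L/γ^2) ≤ (1 + L/γ^2)/a := by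
    rw [le_div_iff₀ ha0]; nlinarith
  rcases le_or_gt (1/5 : ℝ) a with hcase | hcase
  · -- large a : geometric bound
    have hs16 : 16 * L ≤ s := by nlinarith [mul_nonneg (mul_nonneg hL0.le (sub_nonneg.2 hcase)) (by linarith : (0:ℝ) ≤ a + 1/5)]
    have he : Real.exp (-s) ≤ Real.exp (-(16*L)) := by
      apply Real.exp_le_exp.2; linarith
    have hexp16 : Real.exp (16*L) = (2*γ)^(16:ℕ) := by
      rw [show (16:ℝ)*L = ((16:ℕ):ℝ)*L by norm_num, Real.exp_nat_mul,
        Real.exp_log (by linarith)]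
    have hγ0 : (0:ℝ) < γ := by linarith
    have hpow : (65536:ℝ) ≤ (2*γ)^(16:ℕ) := by
      calc (65536:ℝ) = 2^(16:ℕ) := by norm_num
        _ ≤ (2*γ)^(16:ℕ) := by
            apply pow_le_pow_left₀ (by norm_num); linarith
    have he2 : Real.exp (-(16*L)) ≤ 1/2 := by
      rw [Real.exp_neg, hexp16]
      rw [inv_le_comm₀ (by positivity) (by norm_num)]
      linarith
    have h1e : (1:ℝ)/2 ≤ 1 - Real.exp (-s) := by linarith [he.trans he2]
    have hSum : ∑ j ∈ Finset.range B.toNat, Real.exp (-s * ((j:ℝ)+1)^2)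
        ≤ 2 * Real.exp (-(16*L)) := by
      calc ∑ j ∈ Finset.range B.toNat, Real.exp (-s * ((j:ℝ)+1)^2)
          ≤ Real.exp (-s) / (1 - Real.exp (-s)) := geom_sum_exp_le s hs0 B.toNat
        _ ≤ Real.exp (-s) / (1/2) := by
            apply div_le_div_of_nonneg_left (Real.exp_pos _).le (by norm_num) h1e
        _ = 2 * Real.exp (-s) := by ring
        _ ≤ 2 * Real.exp (-(16*L)) := by linarith
    have hkey : 4 * Real.exp (-(16*L)) ≤ L/γ^2 := by
      rw [Real.exp_neg, hexp16]
      have hγ16 : γ^2 ≤ γ^16 := pow_le_pow_right₀ hγ.le (by norm_num)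
      have h216 : ((2*γ):ℝ)^(16:ℕ) = 65536 * γ^16 := by ring
      have h1 : (0.6931471803:ℝ) * γ^2 ≤ L * γ^16 := by
        nlinarith [mul_le_mul_of_nonneg_left hγ16 (by linarith : (0:ℝ) ≤ 0.6931471803),
          mul_le_mul_of_nonneg_right (le_trans hlog2.le hL2) (pow_nonneg hγ0.le 16)]
      rw [show (4:ℝ) * ((2*γ)^(16:ℕ))⁻¹ = 4 / (2*γ)^(16:ℕ) by ring,
        div_le_div_iff₀ (by positivity) (by positivity), h216]
      nlinarith [h1]
    calc 1 + 2 * ∑ j ∈ Finset.range B.toNat, Real.exp (-s * ((j:ℝ)+1)^2)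
        ≤ 1 + 4 * Real.exp (-(16*L)) := by linarith
      _ ≤ 1 + L/γ^2 := by linarith
      _ ≤ (1 + L/γ^2)/a := hlast
  · -- small a : gaussian bound
    have hsq : Real.sqrt (Real.pi/s) ≤ (0.11)/a := by
      have h1 : Real.pi/s ≤ (0.11/a)^2 := by
        rw [div_le_iff₀ hs0]
        have he : (0.11/a)^2 * (400*L*a^2) = 4.84 * L := by
          field_simp; ring
        rw [hsdef, he]
        nlinarith [Real.pi_lt_d2]
      calc Real.sqrt (Real.pi/s) ≤ Real.sqrt ((0.11/a)^2) := Real.sqrt_le_sqrt h1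
        _ = 0.11/a := Real.sqrt_sq (by positivity)
    have hSum := gauss_sum_le s hs0 B.toNat
    have h1a : 1 + (0.11:ℝ)/a ≤ 1/a := by
      rw [← sub_nonneg]
      have : 1/a - (1 + 0.11/a) = (0.89 - a)/a := by field_simp; ring
      rw [this]; apply div_nonneg <;> linarith
    calc 1 + 2 * ∑ j ∈ Finset.range B.toNat, Real.exp (-s * ((j:ℝ)+1)^2)
        ≤ 1 + 2 * (Real.sqrt (Real.pi/s) / 2) := by linarith
      _ = 1 + Real.sqrt (Real.pi/s) := by ring
      _ ≤ 1 + 0.11/a := by linarith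
      _ ≤ 1/a := h1a
      _ ≤ (1 + L/γ^2)/a := by gcongr; linarith

lemma euclNorm_eq_norm {n : ℕ} (v : Fin n → ℝ) :
    euclNorm v = ‖(WithLp.equiv 2 (∀ _ : Fin n, ℝ)).symm v‖ := by
  rw [euclNorm, EuclideanSpace.norm_eq]
  congr 1
  apply Finset.sum_congr rfl
  intro i _
  show v i ^ 2 = ‖v i‖ ^ 2
  rw [Real.norm_eq_abs, sq_abs]

lemma euclNorm_le_of_forall {n : ℕ} (v : Fin n → ℝ) (c : ℝ) (hc : 0 ≤ c)
    (h : ∀ i, |v i| ≤ c) : euclNorm v ≤ Real.sqrt n * c := by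
  rw [euclNorm]
  have h1 : ∑ i, v i ^ 2 ≤ ∑ _i : Fin n, c^2 := by
    apply Finset.sum_le_sum
    intro i _
    rw [← sq_abs]
    apply pow_le_pow_left₀ (abs_nonneg _) (h i)
  have h2 : ∑ _i : Fin n, c^2 = (n:ℝ) * c^2 := by
    rw [Finset.sum_const, Finset.card_univ, Fintype.card_fin, nsmul_eq_mul]
  calc Real.sqrt (∑ i, v i ^ 2) ≤ Real.sqrt ((n:ℝ) * c^2) := by
        apply Real.sqrt_le_sqrt; rw [← h2]; exact h1
    _ = Real.sqrt n * c := by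
        rw [Real.sqrt_mul (Nat.cast_nonneg n), Real.sqrt_sq hc]

lemma sumsq_le_of_euclNorm_le {n : ℕ} (v : Fin n → ℝ) (r : ℝ) (hr : 0 ≤ r)
    (h : euclNorm v ≤ r) : ∑ i, (v i)^2 ≤ r^2 := by
  rw [euclNorm] at h
  have h0 : 0 ≤ ∑ i, v i ^ 2 := Finset.sum_nonneg fun i _ => sq_nonneg _
  calc ∑ i, (v i)^2 = Real.sqrt (∑ i, v i ^ 2) ^ 2 := (Real.sq_sqrt h0).symm
    _ ≤ r^2 := by apply pow_le_pow_left₀ (Real.sqrt_nonneg _) h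

lemma count_bound (n : ℕ) (γ κ : ℝ) (α : Fin n → ℝ) (B : Fin n → ℤ)
    (hγ1 : 1 < γ) (hκ : 1 < κ) (hα0 : ∀ i, 0 < α i) (hα1 : ∀ i, α i ≤ 1)
    (hB : ∀ i, 1 ≤ B i)
    (hprod : (∏ i, α i)⁻¹ ≤ κ ^ n) :
    (((Fintype.piFinset (fun i => Finset.Icc (-(B i)) (B i))).filter
        (fun m : Fin n → ℤ => ∑ i, (α i)^2 * ((m i : ℝ))^2 ≤ n/(4*γ^2))).card : ℝ)
      ≤ κ ^ n * Real.exp ((101 * n / γ^2) * Real.log (2*γ)) := by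
  have h2γ : (1:ℝ) < 2*γ := by linarith
  have hL0 : 0 < Real.log (2*γ) := Real.log_pos h2γ
  set L := Real.log (2*γ) with hLdef
  set lam := 400 * L with hlamdef
  have hlam0 : 0 < lam := by positivity
  set R2 : ℝ := n/(4*γ^2) with hR2def
  set M := (Fintype.piFinset (fun i => Finset.Icc (-(B i)) (B i))).filter
        (fun m : Fin n → ℤ => ∑ i, (α i)^2 * ((m i : ℝ))^2 ≤ R2) with hMdef
  have step1 : (M.card : ℝ) ≤
      Real.exp (lam * R2) * ∏ i, ∑ k ∈ Finset.Icc (-(B i)) (B i),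
        Real.exp (-(lam * (α i)^2) * ((k : ℝ))^2) := by
    have h1 : (M.card : ℝ) = ∑ _m ∈ M, (1:ℝ) := by simp
    rw [h1]
    calc ∑ _m ∈ M, (1:ℝ)
        ≤ ∑ m ∈ M, Real.exp (lam * (R2 - ∑ i, (α i)^2 * ((m i : ℝ))^2)) := by
          apply Finset.sum_le_sum
          intro m hm
          rw [hMdef, Finset.mem_filter] at hm
          have : 0 ≤ lam * (R2 - ∑ i, (α i)^2 * ((m i : ℝ))^2) := by
            apply mul_nonneg hlam0.le; linarith [hm.2]
          calc (1:ℝ) = Real.exp 0 := (Real.exp_zero).symm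
            _ ≤ _ := Real.exp_le_exp.2 this
      _ ≤ ∑ m ∈ Fintype.piFinset (fun i => Finset.Icc (-(B i)) (B i)),
            Real.exp (lam * (R2 - ∑ i, (α i)^2 * ((m i : ℝ))^2)) := by
          apply Finset.sum_le_sum_of_subset_of_nonneg (Finset.filter_subset _ _)
          intro m _ _; exact (Real.exp_pos _).le
      _ ≤ ∑ m ∈ Fintype.piFinset (fun i => Finset.Icc (-(B i)) (B i)),
            Real.exp (lam * R2) * ∏ i, Real.exp (-(lam * (α i)^2) * ((m i : ℝ))^2) := by
          apply le_of_eq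
          apply Finset.sum_congr rfl
          intro m _
          rw [← Real.exp_sum, ← Real.exp_add]
          rw [mul_sub, sub_eq_add_neg]
          congr 2
          rw [Finset.mul_sum, ← Finset.sum_neg_distrib]
          apply Finset.sum_congr rfl
          intro i _; ring
      _ = Real.exp (lam * R2) * ∑ m ∈ Fintype.piFinset (fun i => Finset.Icc (-(B i)) (B i)),
            ∏ i, Real.exp (-(lam * (α i)^2) * ((m i : ℝ))^2) := by
          rw [Finset.mul_sum]
      _ = _ := by
          rw [Finset.prod_univ_sum]
  set η := L / γ^2 with hηdef
  have hη0 : 0 ≤ η := by positivity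
  have step2 : ∏ i, ∑ k ∈ Finset.Icc (-(B i)) (B i),
      Real.exp (-(lam * (α i)^2) * ((k : ℝ))^2) ≤ (1+η)^n / ∏ i, α i := by
    have hbd : ∀ i : Fin n, ∑ k ∈ Finset.Icc (-(B i)) (B i),
        Real.exp (-(lam * (α i)^2) * ((k : ℝ))^2) ≤ (1+η)/α i := by
      intro i
      have := coord_bound γ (α i) hγ1 (hα0 i) (hα1 i) (B i) (hB i)
      convert this using 3 <;> rw [hlamdef] <;> ring
    calc ∏ i, ∑ k ∈ Finset.Icc (-(B i)) (B i),
          Real.exp (-(lam * (α i)^2) * ((k : ℝ))^2)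
        ≤ ∏ i, (1+η)/α i := by
          apply Finset.prod_le_prod
          · intro i _
            apply Finset.sum_nonneg
            intro k _; exact (Real.exp_pos _).le
          · intro i _; exact hbd i
      _ = (1+η)^n / ∏ i, α i := by
          rw [Finset.prod_div_distrib, Finset.prod_const, Finset.card_univ, Fintype.card_fin]
  have step3 : ((1:ℝ)+η)^n / ∏ i, α i ≤ Real.exp (n * η) * κ^n := by
    have h1 : ((1:ℝ)+η)^n ≤ Real.exp (n * η) := by
      calc ((1:ℝ)+η)^n ≤ (Real.exp η)^n := by
            apply pow_le_pow_left₀ (by linarith)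
            linarith [Real.add_one_le_exp η]
        _ = Real.exp (n * η) := by rw [← Real.exp_nat_mul]
    have h2 : (0:ℝ) < ∏ i, α i := Finset.prod_pos (fun i _ => hα0 i)
    calc ((1:ℝ)+η)^n / ∏ i, α i = ((1:ℝ)+η)^n * (∏ i, α i)⁻¹ := by ring
      _ ≤ Real.exp (n * η) * κ^n := by
          apply mul_le_mul h1 hprod (by positivity)
          positivity
  have hexp : Real.exp (lam * R2) * (Real.exp (n * η) * κ^n)
      = κ ^ n * Real.exp ((101 * n / γ^2) * L) := by
    rw [show Real.exp (lam * R2) * (Real.exp ((n:ℝ) * η) * κ^n)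
      = κ^n * (Real.exp (lam * R2) * Real.exp ((n:ℝ) * η)) by ring, ← Real.exp_add]
    have hγ0 : γ ≠ 0 := by intro h; rw [h] at hγ1; norm_num at hγ1
    have : lam * R2 + n * η = (101 * n / γ^2) * L := by
      rw [hlamdef, hR2def, hηdef]; field_simp; ring
    rw [this]
  calc (M.card : ℝ)
      ≤ Real.exp (lam * R2) * ∏ i, ∑ k ∈ Finset.Icc (-(B i)) (B i),
        Real.exp (-(lam * (α i)^2) * ((k : ℝ))^2) := step1
    _ ≤ Real.exp (lam * R2) * ((1+η)^n / ∏ i, α i) := by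
        apply mul_le_mul_of_nonneg_left step2 (Real.exp_pos _).le
    _ ≤ Real.exp (lam * R2) * (Real.exp (n * η) * κ^n) := by
        apply mul_le_mul_of_nonneg_left step3 (Real.exp_pos _).le
    _ = κ ^ n * Real.exp ((101 * n / γ^2) * L) := hexp

theorem covering_final_proposition :
    ∃ C₁ C₂ : ℝ, 0 < C₁ ∧ 0 < C₂ ∧
    ∀ (n : ℕ) (γ ε κ : ℝ) (α : Fin n → ℝ) (S : Set (Fin n → ℝ)),
      1 < γ → γ < Real.sqrt n → 0 < ε → ε < 1 / (20 * γ) → 1 < κ →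
      (∀ i, 0 ≤ α i) → (∀ i, α i ≤ 1) → κ ^ (-(n : ℝ)) ≤ ∏ i, α i →
      (∀ x ∈ S, euclNorm x = 1) →
      ∃ 𝒩 : Finset (Fin n → ℝ),
        -- `𝒩 ⊆ (5/4)B₂ⁿ \ (3/4)B₂ⁿ`
        (∀ y ∈ 𝒩, 3 / 4 < euclNorm y ∧ euclNorm y ≤ 5 / 4) ∧
        -- `S ⊆ 𝒩 + (4εγ/√n)P_α`
        (∀ x ∈ S, ∃ y ∈ 𝒩, ∀ i, |x i - y i| ≤ (4 * ε * γ / Real.sqrt n) * α i) ∧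
        (𝒩.card : ℝ) ≤ (coverNum S {v | euclNorm v ≤ ε} : ℝ) * κ ^ n *
          (C₁ * γ) ^ (C₂ * n / γ ^ 2) := by
  refine ⟨2, 101, by norm_num, by norm_num, ?_⟩
  intro n γ ε κ α S hγ1 hγn hε hεγ hκ hα0 hα1 hprodκ hS
  classical
  have hγ0 : (0:ℝ) < γ := by linarith
  have hκ0 : (0:ℝ) < κ := by linarith
  have hsn1 : (1:ℝ) < Real.sqrt n := lt_trans hγ1 hγn
  have hsn0 : (0:ℝ) < Real.sqrt n := by linarith
  have hn0 : (0:ℝ) < (n:ℝ) := by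
    by_contra h
    push_neg at h
    rw [Real.sqrt_eq_zero'.2 h] at hsn0
    exact lt_irrefl 0 hsn0
  have hαpos : ∀ i, 0 < α i := by
    intro i
    rcases (hα0 i).lt_or_eq with h | h
    · exact h
    · exfalso
      have h0 : ∏ j, α j = 0 := Finset.prod_eq_zero (Finset.mem_univ i) h.symm
      have := Real.rpow_pos_of_pos hκ0 (-(n:ℝ))
      rw [h0] at hprodκ
      linarith
  have hprodpos : (0:ℝ) < ∏ i, α i := Finset.prod_pos fun i _ => hαpos i
  have hprodinv : (∏ i, α i)⁻¹ ≤ κ ^ n := by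
    have h1 : κ ^ (-(n:ℝ)) = ((κ:ℝ)^n)⁻¹ := by
      rw [Real.rpow_neg hκ0.le, Real.rpow_natCast]
    rw [h1] at hprodκ
    calc (∏ i, α i)⁻¹ ≤ (((κ:ℝ)^n)⁻¹)⁻¹ := by
          apply inv_anti₀ (by positivity) hprodκ
      _ = κ^n := inv_inv _
  set K : Set (Fin n → ℝ) := {v | euclNorm v ≤ ε} with hKdef
  -- the covering-number set is nonempty
  have hKne : {m : ℕ | ∃ T : Finset (Fin n → ℝ), T.card = m ∧
      S ⊆ {y | ∃ t ∈ T, y - t ∈ K}}.Nonempty := by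
    have hcb : TotallyBounded (Metric.closedBall (0 : Fin n → ℝ) 1) :=
      (isCompact_closedBall _ _).totallyBounded
    rw [Metric.totallyBounded_iff] at hcb
    obtain ⟨t0, ht0fin, ht0cov⟩ := hcb (ε / Real.sqrt n) (by positivity)
    refine ⟨ht0fin.toFinset.card, ht0fin.toFinset, rfl, ?_⟩
    intro x hx
    have hx1 : x ∈ Metric.closedBall (0 : Fin n → ℝ) 1 := by
      rw [Metric.mem_closedBall]
      rw [show dist x (0 : Fin n → ℝ) = dist x 0 from rfl]
      apply (dist_pi_le_iff zero_le_one).2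
      intro i
      have hsum1 : ∑ j, x j ^ 2 = 1 := by
        have := hS x hx
        rw [euclNorm] at this
        exact Real.sqrt_eq_one.1 this
      have hxi : (x i)^2 ≤ 1 := by
        rw [← hsum1]
        apply Finset.single_le_sum (fun j _ => sq_nonneg (x j)) (Finset.mem_univ i)
      simp only [Pi.zero_apply, Real.dist_eq, sub_zero]
      calc |x i| = Real.sqrt ((x i)^2) := (Real.sqrt_sq_eq_abs _).symm
        _ ≤ Real.sqrt 1 := Real.sqrt_le_sqrt hxi
        _ = 1 := Real.sqrt_one
    obtain ⟨y, hyt, hxy⟩ := Set.mem_iUnion₂.1 (ht0cov hx1)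
    refine ⟨y, ht0fin.mem_toFinset.2 hyt, ?_⟩
    show euclNorm (x - y) ≤ ε
    have hd : ∀ i, |x i - y i| ≤ ε / Real.sqrt n := by
      intro i
      have h1 := dist_le_pi_dist x y i
      have h2 : dist x y < ε / Real.sqrt n := Metric.mem_ball.1 hxy
      rw [Real.dist_eq] at h1
      exact le_of_lt (lt_of_le_of_lt h1 h2)
    calc euclNorm (x - y) ≤ Real.sqrt n * (ε / Real.sqrt n) :=
          euclNorm_le_of_forall _ _ (by positivity) (fun i => hd i)
      _ = ε := by field_simp
  obtain ⟨T, hTcard, hTcov⟩ := Nat.sInf_mem hKne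
  have hTc : T.card = coverNum S K := hTcard
  set δ : ℝ := 4 * ε * γ / Real.sqrt n with hδdef
  have hδ0 : (0:ℝ) < δ := by positivity
  set R : ℝ := Real.sqrt n / (2 * γ) with hRdef
  have hR0 : (0:ℝ) < R := by positivity
  have hRsq : R^2 = n/(4*γ^2) := by
    rw [hRdef, div_pow, Real.sq_sqrt hn0.le]; ring
  set B : Fin n → ℤ := fun i => ⌈R / α i⌉ with hBdef
  have hB1 : ∀ i, 1 ≤ B i := by
    intro i
    have h1 : (0:ℝ) < R / α i := div_pos hR0 (hαpos i)
    have h2 : (0:ℤ) < ⌈R / α i⌉ := Int.ceil_pos.2 h1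
    show (1:ℤ) ≤ ⌈R / α i⌉
    omega
  set M := (Fintype.piFinset (fun i => Finset.Icc (-(B i)) (B i))).filter
        (fun m : Fin n → ℤ => ∑ i, (α i)^2 * ((m i : ℝ))^2 ≤ n/(4*γ^2)) with hMdef
  set 𝒩 := ((T ×ˢ M).image
      (fun p : (Fin n → ℝ) × (Fin n → ℤ) => p.1 + fun i => δ * α i * (p.2 i : ℝ))).filter
      (fun y => 3/4 < euclNorm y ∧ euclNorm y ≤ 5/4) with h𝒩def
  have h2εγ : 2 * ε * γ < 1/10 := by
    rw [lt_div_iff₀ (by positivity : (0:ℝ) < 20 * γ)] at hεγ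
    nlinarith
  refine ⟨𝒩, ?_, ?_, ?_⟩
  · intro y hy
    exact (Finset.mem_filter.1 hy).2
  · -- covering property
    intro x hx
    obtain ⟨t, htT, htK⟩ := hTcov hx
    have hu : euclNorm (x - t) ≤ ε := htK
    set u : Fin n → ℝ := x - t with hudef
    set m : Fin n → ℤ := fun i => round (u i / (δ * α i)) with hmdef
    set y : Fin n → ℝ := t + fun i => δ * α i * (m i : ℝ) with hydef
    have hxyi : ∀ i, x i - y i = u i - δ * α i * (m i : ℝ) := by
      intro i
      show x i - (t i + δ * α i * (m i : ℝ)) = (x i - t i) - δ * α i * (m i : ℝ)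
      ring
    have habs : ∀ i, |x i - y i| ≤ δ * α i / 2 := by
      intro i
      have hδα : (0:ℝ) < δ * α i := by
        have := hαpos i; positivity
      have h1 : |u i / (δ * α i) - (m i : ℝ)| ≤ 1/2 := abs_sub_round _
      have h2 : u i - δ * α i * (m i : ℝ) = (δ * α i) * (u i / (δ * α i) - (m i : ℝ)) := by
        rw [mul_sub, mul_div_cancel₀ (u i) hδα.ne']
      rw [hxyi i, h2, abs_mul, abs_of_pos hδα]
      calc (δ * α i) * |u i / (δ * α i) - (m i : ℝ)| ≤ (δ * α i) * (1/2) :=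
            mul_le_mul_of_nonneg_left h1 hδα.le
        _ = δ * α i / 2 := by ring
    have husq : ∑ i, (u i)^2 ≤ ε^2 := sumsq_le_of_euclNorm_le _ _ hε.le hu
    have hkey : ∀ i, (δ * α i)^2 * ((m i : ℝ))^2 ≤ 4 * (u i)^2 := by
      intro i
      by_cases hmi : m i = 0
      · rw [hmi]; simp; positivity
      · have hδα : (0:ℝ) < δ * α i := by have := hαpos i; positivity
        have h1 : (1:ℝ) ≤ |(m i : ℝ)| := by
          have : (1:ℤ) ≤ |m i| := Int.one_le_abs hmi
          calc (1:ℝ) = ((1:ℤ):ℝ) := by norm_num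
            _ ≤ ((|m i| : ℤ):ℝ) := by exact_mod_cast this
            _ = |(m i : ℝ)| := by rw [Int.cast_abs]
        have h2 : |u i - δ * α i * (m i : ℝ)| ≤ δ * α i / 2 := by
          rw [← hxyi i]; exact habs i
        have h3 : |δ * α i * (m i : ℝ)| - |u i| ≤ |u i - δ * α i * (m i : ℝ)| := by
          rw [abs_sub_comm]
          exact abs_sub_abs_le_abs_sub _ _
        have h4 : |δ * α i * (m i : ℝ)| = (δ * α i) * |(m i : ℝ)| := by
          rw [abs_mul, abs_of_pos hδα]
        have h5 : δ * α i ≤ (δ * α i) * |(m i : ℝ)| :=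
          le_mul_of_one_le_right hδα.le h1
        have h6 : (δ * α i) * |(m i : ℝ)| ≤ 2 * |u i| := by
          rw [h4] at h3; linarith
        have h7 : ((δ * α i) * |(m i : ℝ)|)^2 ≤ (2 * |u i|)^2 := by
          apply pow_le_pow_left₀ (by positivity) h6
        calc (δ * α i)^2 * ((m i : ℝ))^2 = ((δ * α i) * |(m i : ℝ)|)^2 := by
              rw [mul_pow (δ * α i) |(m i : ℝ)|, sq_abs]
          _ ≤ (2 * |u i|)^2 := h7
          _ = 4 * (u i)^2 := by rw [mul_pow (2:ℝ) |u i|, sq_abs]; ring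
    have hsumM : ∑ i, (α i)^2 * ((m i : ℝ))^2 ≤ n/(4*γ^2) := by
      have h1 : ∑ i, (δ * α i)^2 * ((m i : ℝ))^2 ≤ 4 * ε^2 := by
        calc ∑ i, (δ * α i)^2 * ((m i : ℝ))^2 ≤ ∑ i, 4 * (u i)^2 :=
              Finset.sum_le_sum fun i _ => hkey i
          _ = 4 * ∑ i, (u i)^2 := by rw [Finset.mul_sum]
          _ ≤ 4 * ε^2 := by linarith
      have h2 : ∑ i, (δ * α i)^2 * ((m i : ℝ))^2 = δ^2 * ∑ i, (α i)^2 * ((m i : ℝ))^2 := by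
        rw [Finset.mul_sum]
        apply Finset.sum_congr rfl
        intro i _; ring
      have hδsq : δ^2 = 16*ε^2*γ^2/(n:ℝ) := by
        rw [hδdef, div_pow, Real.sq_sqrt hn0.le]; ring
      rw [h2] at h1
      have h3 : ∑ i, (α i)^2 * ((m i : ℝ))^2 ≤ 4 * ε^2 / δ^2 := by
        rw [le_div_iff₀ (by positivity)]
        calc (∑ i, (α i)^2 * ((m i : ℝ))^2) * δ^2
            = δ^2 * ∑ i, (α i)^2 * ((m i : ℝ))^2 := by ring
          _ ≤ 4 * ε^2 := h1
      have h4 : 4 * ε^2 / δ^2 = n/(4*γ^2) := by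
        rw [hδsq]
        field_simp
        ring
      rw [h4] at h3
      exact h3
    have hmM : m ∈ M := by
      rw [hMdef, Finset.mem_filter]
      refine ⟨?_, hsumM⟩
      rw [Fintype.mem_piFinset]
      intro i
      rw [Finset.mem_Icc]
      have h1 : (α i)^2 * ((m i : ℝ))^2 ≤ R^2 := by
        rw [hRsq]
        calc (α i)^2 * ((m i : ℝ))^2 ≤ ∑ j, (α j)^2 * ((m j : ℝ))^2 := by
              apply Finset.single_le_sum (f := fun j => (α j)^2 * ((m j : ℝ))^2)
                (fun j _ => by positivity) (Finset.mem_univ i)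
          _ ≤ n/(4*γ^2) := hsumM
      have h2 : α i * |(m i : ℝ)| ≤ R := by
        have e1 : (α i * |(m i : ℝ)|)^2 = (α i)^2 * ((m i : ℝ))^2 := by
          rw [mul_pow (α i) |(m i : ℝ)|, sq_abs]
        calc α i * |(m i : ℝ)| = Real.sqrt ((α i * |(m i : ℝ)|)^2) := by
              rw [Real.sqrt_sq (mul_nonneg (hα0 i) (abs_nonneg _))]
          _ ≤ Real.sqrt (R^2) := by
              apply Real.sqrt_le_sqrt; rw [e1]; exact h1
          _ = R := Real.sqrt_sq hR0.le
      have h3 : |(m i : ℝ)| ≤ R / α i := by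
        rw [le_div_iff₀ (hαpos i)]
        calc |(m i : ℝ)| * α i = α i * |(m i : ℝ)| := by ring
          _ ≤ R := h2
      have h4 : ((|m i| : ℤ) : ℝ) ≤ ((B i : ℤ) : ℝ) := by
        rw [Int.cast_abs]
        calc |(m i : ℝ)| ≤ R / α i := h3
          _ ≤ ((B i : ℤ) : ℝ) := Int.le_ceil _
      have h5 : |m i| ≤ B i := by exact_mod_cast h4
      exact abs_le.mp h5
    have hxy2 : euclNorm (x - y) ≤ 2 * ε * γ := by
      calc euclNorm (x - y) ≤ Real.sqrt n * (δ/2) := by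
            apply euclNorm_le_of_forall _ _ (by positivity)
            intro i
            show |(x - y) i| ≤ δ/2
            rw [Pi.sub_apply]
            calc |x i - y i| ≤ δ * α i / 2 := habs i
              _ ≤ δ/2 := by nlinarith [hα1 i, hαpos i, hδ0]
        _ = 2 * ε * γ := by
            rw [hδdef]; field_simp; ring
    have hynorm : 3/4 < euclNorm y ∧ euclNorm y ≤ 5/4 := by
      have hx1 : euclNorm x = 1 := hS x hx
      have htri1 : euclNorm x - euclNorm (x - y) ≤ euclNorm y := by
        rw [euclNorm_eq_norm, euclNorm_eq_norm, euclNorm_eq_norm]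
        have : (WithLp.equiv 2 (∀ _ : Fin n, ℝ)).symm (x - y)
            = (WithLp.equiv 2 (∀ _ : Fin n, ℝ)).symm x
              - (WithLp.equiv 2 (∀ _ : Fin n, ℝ)).symm y := rfl
        rw [this]
        linarith [norm_sub_norm_le ((WithLp.equiv 2 (∀ _ : Fin n, ℝ)).symm x)
          ((WithLp.equiv 2 (∀ _ : Fin n, ℝ)).symm y)]
      have htri2 : euclNorm y ≤ euclNorm x + euclNorm (x - y) := by
        rw [euclNorm_eq_norm, euclNorm_eq_norm, euclNorm_eq_norm]
        have h : (WithLp.equiv 2 (∀ _ : Fin n, ℝ)).symm (x - y)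
            = (WithLp.equiv 2 (∀ _ : Fin n, ℝ)).symm x
              - (WithLp.equiv 2 (∀ _ : Fin n, ℝ)).symm y := rfl
        rw [h]
        have := norm_sub_norm_le ((WithLp.equiv 2 (∀ _ : Fin n, ℝ)).symm y)
          ((WithLp.equiv 2 (∀ _ : Fin n, ℝ)).symm x)
        rw [← norm_neg ((WithLp.equiv 2 (∀ _ : Fin n, ℝ)).symm y
          - (WithLp.equiv 2 (∀ _ : Fin n, ℝ)).symm x)] at this
        simp only [neg_sub] at this
        linarith
      have h0 : 0 ≤ euclNorm (x - y) := Real.sqrt_nonneg _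
      constructor
      · rw [hx1] at htri1; linarith
      · rw [hx1] at htri2; linarith
    have hy𝒩 : y ∈ 𝒩 := by
      rw [h𝒩def, Finset.mem_filter]
      refine ⟨?_, hynorm⟩
      apply Finset.mem_image.2
      exact ⟨(t, m), Finset.mem_product.2 ⟨htT, hmM⟩, rfl⟩
    refine ⟨y, hy𝒩, ?_⟩
    intro i
    calc |x i - y i| ≤ δ * α i / 2 := habs i
      _ ≤ δ * α i := by nlinarith [hαpos i, hδ0]
  · -- cardinality bound
    have hcount := count_bound n γ κ α B hγ1 hκ hαpos hα1 hB1 hprodinv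
    have hMcard : (M.card : ℝ) ≤ κ ^ n * Real.exp ((101 * n / γ^2) * Real.log (2*γ)) := by
      rw [hMdef]; exact hcount
    have hc1 : (𝒩.card : ℝ) ≤ (T.card : ℝ) * (M.card : ℝ) := by
      have h1 : 𝒩.card ≤ (T ×ˢ M).card :=
        le_trans (Finset.card_filter_le _ _) Finset.card_image_le
      rw [Finset.card_product] at h1
      exact_mod_cast h1
    have hrpow : Real.exp ((101 * n / γ^2) * Real.log (2*γ))
        = (2 * γ) ^ ((101:ℝ) * n / γ ^ 2) := by
      rw [Real.rpow_def_of_pos (by linarith : (0:ℝ) < 2*γ)]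
      rw [mul_comm]
    calc (𝒩.card : ℝ) ≤ (T.card : ℝ) * (M.card : ℝ) := hc1
      _ ≤ (T.card : ℝ) * (κ ^ n * Real.exp ((101 * n / γ^2) * Real.log (2*γ))) := by
          apply mul_le_mul_of_nonneg_left hMcard (Nat.cast_nonneg _)
      _ = (coverNum S K : ℝ) * κ ^ n * Real.exp ((101 * n / γ^2) * Real.log (2*γ)) := by
          rw [hTc]; ring
      _ = (coverNum S K : ℝ) * κ ^ n * (2 * γ) ^ ((101:ℝ) * n / γ ^ 2) := by
          rw [hrpow]
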